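/- Let (X,μ) and (Y,ν) be topological k-means and g: X → Y a continuous map with g ∘ μ = ν ∘ g_k, where g_k applies g coordinatewise. If g is surjective and μ's barycentric operator is power convergent with β-extension μ̃, then ν's barycentric operator is power convergent with some β-extension ν̃, and g ∘ μ̃ = ν̃ ∘ g_{k+1}. -/

import Mathlib

/-- A `k`-mean: idempotent on constant tuples. -/
def IsMean {X : Type*} {k : ℕ} (μ : (Fin k → X) → X) : Prop :=
  ∀ x : X, μ (fun _ => x) = x

/-- The barycentric operator. -/
def bary {X : Type*} {k : ℕ} (μ : (Fin k → X) → X) (x : Fin (k+1) → X) : Fin (k+1) → X :=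
  fun i => μ (fun j => x (i.succAbove j))

theorem surjective_homomorphism_pushes_extension
    {X Y : Type*} [TopologicalSpace X] [TopologicalSpace Y] [T2Space X] [T2Space Y]
    {k : ℕ} (μ : (Fin k → X) → X) (ν : (Fin k → Y) → Y)
    (hμmean : IsMean μ) (hμcont : Continuous μ)
    (hνmean : IsMean ν) (hνcont : Continuous ν)
    (g : X → Y) (hgcont : Continuous g) (hgsurj : Function.Surjective g)
    (hhom : ∀ x : Fin k → X, g (μ x) = ν (g ∘ x))
    (μt : (Fin (k+1) → X) → X)
    (hμt : ∀ x : Fin (k+1) → X,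
      Filter.Tendsto (fun n => (bary μ)^[n] x) Filter.atTop (nhds fun _ => μt x)) :
    ∃ νt : (Fin (k+1) → Y) → Y,
      (∀ y : Fin (k+1) → Y,
        Filter.Tendsto (fun n => (bary ν)^[n] y) Filter.atTop (nhds fun _ => νt y)) ∧
      (∀ x : Fin (k+1) → X, g (μt x) = νt (g ∘ x)) := by
  have hcomm : ∀ x : Fin (k+1) → X, g ∘ bary μ x = bary ν (g ∘ x) := by
    intro x
    funext i
    simp only [Function.comp, bary]
    rw [hhom]
    rfl
  have hiter : ∀ (n : ℕ) (x : Fin (k+1) → X),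
      g ∘ (bary μ)^[n] x = (bary ν)^[n] (g ∘ x) := by
    intro n
    induction n with
    | zero => intro x; rfl
    | succ n ih =>
      intro x
      rw [Function.iterate_succ_apply, Function.iterate_succ_apply, ih, hcomm]
  have key : ∀ x : Fin (k+1) → X,
      Filter.Tendsto (fun n => (bary ν)^[n] (g ∘ x)) Filter.atTop
        (nhds fun _ => g (μt x)) := by
    intro x
    have : Filter.Tendsto (fun n => g ∘ (bary μ)^[n] x) Filter.atTop
        (nhds fun _ => g (μt x)) := by
      have hc : Continuous (fun f : Fin (k+1) → X => g ∘ f) :=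
        continuous_pi fun i => hgcont.comp (continuous_apply i)
      have := (hc.tendsto _).comp (hμt x)
      exact this
    simpa only [hiter] using this
  set s : Y → X := Function.surjInv hgsurj with hs
  have hgs : ∀ y : Y, g (s y) = y := fun y => Function.surjInv_eq hgsurj y
  refine ⟨fun y => g (μt (s ∘ y)), ?_, ?_⟩
  · intro y
    have := key (s ∘ y)
    have hy : g ∘ (s ∘ y) = y := by funext i; exact hgs (y i)
    rwa [hy] at this
  · intro x
    have h1 := key x
    have h2 := key (s ∘ (g ∘ x))
    have hy : g ∘ (s ∘ (g ∘ x)) = g ∘ x := by funext i; exact hgs (g (x i))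
    rw [hy] at h2
    have := tendsto_nhds_unique h1 h2
    exact congrFun this 0
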